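/- Let a, b, c, d be purely imaginary quaternions with b ≠ a, c ≠ b, d ≠ c, d ≠ a and c ≠ a, and let α, β ∈ ℝ with β ≠ 0. If the quaternionic cross-ratio satisfies q(a,b,c,d) = α/β (a real scalar), then α (b−a)/‖b−a‖² − β (d−a)/‖d−a‖² = (α − β)(c−a)/‖c−a‖². -/

import Mathlib

/-- The quaternionic cross-ratio `q(a,b,c,d) = (a−b)(b−c)⁻¹(c−d)(d−a)⁻¹`. -/
noncomputable def qcr (a b c d : Quaternion ℝ) : Quaternion ℝ :=
  (a - b) * (b - c)⁻¹ * (c - d) * (d - a)⁻¹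

private lemma smul_div_norm_eq (x : Quaternion ℝ) (hx : x.re = 0) (γ : ℝ) :
    (γ / ‖x‖ ^ 2) • x = -(γ • x⁻¹) := by
  have hstar : star x = -x := Quaternion.star_eq_neg.2 hx
  have hinv : x⁻¹ = (Quaternion.normSq x)⁻¹ • star x := Quaternion.inv_def x
  rw [hinv, hstar, smul_neg, smul_neg, neg_neg, smul_smul, div_eq_mul_inv,
    Quaternion.normSq_eq_norm_mul_self, pow_two]

theorem stmt_9 (a b c d : Quaternion ℝ)
    (ha : a.re = 0) (hb : b.re = 0) (hc : c.re = 0) (hd : d.re = 0)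
    (hba : b ≠ a) (hcb : c ≠ b) (hdc : d ≠ c) (hda : d ≠ a) (hca : c ≠ a)
    (α β : ℝ) (hβ : β ≠ 0)
    (hq : qcr a b c d = ((α / β : ℝ) : Quaternion ℝ)) :
    (α / ‖b - a‖ ^ 2) • (b - a) - (β / ‖d - a‖ ^ 2) • (d - a) =
      ((α - β) / ‖c - a‖ ^ 2) • (c - a) := by
  set x : Quaternion ℝ := b - a with hxdef
  set y : Quaternion ℝ := c - b with hydef
  set z : Quaternion ℝ := d - c with hzdef
  set w : Quaternion ℝ := a - d with hwdef
  set v : Quaternion ℝ := c - a with hvdef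
  have hx0 : x ≠ 0 := sub_ne_zero.2 hba
  have hy0 : y ≠ 0 := sub_ne_zero.2 hcb
  have hw0 : w ≠ 0 := sub_ne_zero.2 (fun h => hda h.symm)
  have hv0 : v ≠ 0 := sub_ne_zero.2 hca
  have hxre : x.re = 0 := by simp [hxdef, Quaternion.re_sub, hb, ha]
  have hwre : w.re = 0 := by simp [hwdef, Quaternion.re_sub, ha, hd]
  have hvre : v.re = 0 := by simp [hvdef, Quaternion.re_sub, hc, ha]
  have hvxy : v = x + y := by rw [hvdef, hxdef, hydef]; abel
  have hz : z = -(x + y + w) := by rw [hzdef, hxdef, hydef, hwdef]; abel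
  have hq0 : x * y⁻¹ * z * w⁻¹ = ((α / β : ℝ) : Quaternion ℝ) := by
    rw [← hq, qcr, show a - b = -x by rw [hxdef]; abel, show b - c = -y by rw [hydef]; abel,
      show c - d = -z by rw [hzdef]; abel, show d - a = -w by rw [hwdef]; abel,
      inv_neg, inv_neg]
    simp only [mul_neg, neg_mul, neg_neg]
  have hdav : d - a = -w := (neg_sub a d).symm
  rw [hdav]
  clear_value x y z w v
  clear hq hxdef hydef hzdef hwdef hvdef ha hb hc hd hba hcb hdc hda hca
  -- now pure algebra in x, y, z, w, v
  have hv0' : x + y ≠ 0 := hvxy ▸ hv0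
  have hq' : x * y⁻¹ * z = (α / β) • w := by
    have h1 := congrArg (· * w) hq0
    simp only [mul_assoc, inv_mul_cancel₀ hw0, mul_one] at h1
    simp only [← mul_assoc] at h1
    rw [h1, Quaternion.coe_mul_eq_smul]
  have key : α • (y * (x⁻¹ * w)) = β • (-(x + y + w)) := by
    have h2 : -(x + y + w) = (α / β) • (y * (x⁻¹ * w)) := by
      rw [← hz, ← mul_smul_comm, ← mul_smul_comm, ← hq', mul_assoc,
        inv_mul_cancel_left₀ hx0, mul_inv_cancel_left₀ hy0]
    have h3 := congrArg (β • ·) h2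
    simp only [smul_smul, mul_div_cancel₀ α hβ] at h3
    exact h3.symm
  have main : α • x⁻¹ + β • w⁻¹ = (α - β) • v⁻¹ := by
    apply mul_left_cancel₀ hv0
    apply mul_right_cancel₀ hw0
    rw [hvxy]
    have hL : (x + y) * (α • x⁻¹ + β • w⁻¹) * w
        = α • (x * (x⁻¹ * w)) + α • (y * (x⁻¹ * w)) + β • (x * (w⁻¹ * w))
          + β • (y * (w⁻¹ * w)) := by
      simp only [mul_add, add_mul, mul_smul_comm, smul_mul_assoc, mul_assoc, smul_add]
      abel
    have hR : (x + y) * ((α - β) • (x + y)⁻¹) * w = (α - β) • ((x + y) * ((x + y)⁻¹ * w)) := by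
      simp only [mul_smul_comm, smul_mul_assoc, mul_assoc]
    rw [hL, hR, mul_inv_cancel_left₀ hx0, inv_mul_cancel₀ hw0, mul_one, mul_one,
      mul_inv_cancel_left₀ hv0', key]
    module
  have e1 := smul_div_norm_eq x hxre α
  have e2 := smul_div_norm_eq w hwre β
  have e3 := smul_div_norm_eq v hvre (α - β)
  rw [norm_neg, smul_neg, e1, e2, e3, neg_neg, ← main]
  abel
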